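/- Every generalized pentagonal number c ≥ 5 can be written as c = 2a + b where a and b are generalized pentagonal numbers with a < c and b < c. -/

import Mathlib

namespace GPaux
open Zsqrtd

def lam : ℤ√3 := ⟨1, 1⟩
def th : ℤ√3 := ⟨2, 1⟩

lemma lam_pow_succ_re (n : ℕ) : (lam ^ (n+1)).re = (lam ^ n).re + 3 * (lam ^ n).im := by
  rw [pow_succ]; simp [Zsqrtd.re_mul, lam]

lemma lam_pow_succ_im (n : ℕ) : (lam ^ (n+1)).im = (lam ^ n).re + (lam ^ n).im := by
  rw [pow_succ]; simp [Zsqrtd.im_mul, lam]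

lemma lam_pow_re_mod (n : ℕ) : ((lam ^ n).re : ZMod 3) = 1 := by
  induction n with
  | zero => simp
  | succ k ih =>
    rw [lam_pow_succ_re]; push_cast [ih]
    rw [show (3 : ZMod 3) = 0 by decide]; ring

lemma lam_pow_im_mod (n : ℕ) : ((lam ^ n).im : ZMod 3) = (n : ZMod 3) := by
  induction n with
  | zero => simp
  | succ k ih => rw [lam_pow_succ_im]; push_cast [ih, lam_pow_re_mod]; ring

lemma cube_im (x : ℤ√3) : (x ^ 3).im = 3 * x.im * (x.re ^ 2 + x.im ^ 2) := by
  rw [pow_succ, pow_two]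
  simp [Zsqrtd.im_mul, Zsqrtd.re_mul]; ring

lemma lte : ∀ m : ℕ, ∀ n : ℕ, ((3:ℤ) ^ m ∣ (lam ^ n).im) → ((3:ℤ) ^ m ∣ (n : ℤ))
  | 0, n, _ => one_dvd _
  | (m+1), n, h => by
    have h3 : (3:ℤ) ∣ (lam ^ n).im := dvd_trans (dvd_pow_self 3 (Nat.succ_ne_zero m)) h
    have hn3 : (3:ℕ) ∣ n := by
      have hz : (((lam ^ n).im : ℤ) : ZMod 3) = 0 :=
        (ZMod.intCast_zmod_eq_zero_iff_dvd _ 3).mpr h3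
      rw [lam_pow_im_mod] at hz
      exact (ZMod.natCast_eq_zero_iff n 3).mp hz
    obtain ⟨n', rfl⟩ := hn3
    have hpow : lam ^ (3 * n') = (lam ^ n') ^ 3 := by rw [← pow_mul, Nat.mul_comm]
    rw [hpow, cube_im] at h
    set c := (lam ^ n').re with hc
    set d := (lam ^ n').im with hd
    have hE : ¬ (3:ℤ) ∣ (c ^ 2 + d ^ 2) := by
      intro hdvd
      have h1 : ((c:ZMod 3)) = 1 := lam_pow_re_mod n'
      have h0 : ((c ^ 2 + d ^ 2 : ℤ) : ZMod 3) = 0 :=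
        (ZMod.intCast_zmod_eq_zero_iff_dvd _ 3).mpr hdvd
      push_cast [h1] at h0
      revert h0
      have : ∀ x : ZMod 3, 1 + x ^ 2 ≠ 0 := by decide
      exact this _
    have hcop : IsCoprime ((3:ℤ) ^ m) (c ^ 2 + d ^ 2) :=
      IsCoprime.pow_left ((Int.prime_three.coprime_iff_not_dvd).mpr hE)
    have hdm : (3:ℤ) ^ m ∣ d * (c ^ 2 + d ^ 2) := by
      have h' : (3:ℤ) * 3 ^ m ∣ 3 * (d * (c ^ 2 + d ^ 2)) := by
        rw [show (3:ℤ) * (d * (c^2+d^2)) = 3 * d * (c^2+d^2) by ring]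
        rw [show (3:ℤ) * 3 ^ m = 3 ^ (m+1) by ring]
        exact h
      exact (mul_dvd_mul_iff_left (by norm_num : (3:ℤ) ≠ 0)).mp h'
    have hdvd_d : (3:ℤ) ^ m ∣ d := hcop.dvd_of_dvd_mul_right hdm
    have := lte m n' hdvd_d
    push_cast
    rw [show ((3:ℤ) ^ (m+1)) = 3 * 3 ^ m by ring]
    exact mul_dvd_mul_left 3 (by exact_mod_cast this)

-- u, r sequences
def ur (i : ℕ) : ℤ√3 := lam * th ^ i

lemma ur_succ_re (i : ℕ) : (ur (i+1)).re = 2 * (ur i).re + 3 * (ur i).im := by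
  unfold ur; rw [pow_succ, ← mul_assoc]
  simp [Zsqrtd.re_mul, th]; ring

lemma ur_succ_im (i : ℕ) : (ur (i+1)).im = (ur i).re + 2 * (ur i).im := by
  unfold ur; rw [pow_succ, ← mul_assoc]
  simp [Zsqrtd.im_mul, th]; ring

lemma ur_growth : ∀ i : ℕ, 1 ≤ (ur i).re ∧ (2 * i + 1 : ℤ) ≤ (ur i).im := by
  intro i
  induction i with
  | zero => unfold ur; norm_num [lam]
  | succ k ih =>
    obtain ⟨h1, h2⟩ := ih
    constructor
    · rw [ur_succ_re]; push_cast; linarith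
    · rw [ur_succ_im]; push_cast; push_cast at h2; linarith

lemma ur_strict (i : ℕ) (h : 2 ≤ i) : (2 * i + 1 : ℤ) < (ur i).im := by
  obtain ⟨j, rfl⟩ : ∃ j, i = j + 1 := ⟨i - 1, by omega⟩
  have h1 := (ur_growth j).1
  have h2 := (ur_growth j).2
  rw [ur_succ_im]; push_cast; push_cast at h2
  have : (1:ℤ) ≤ j := by exact_mod_cast (by omega : 1 ≤ j)
  linarith

lemma lam_odd_pow_im (i : ℕ) : (lam ^ (2*i+1)).im = 2 ^ i * (ur i).im := by
  have h2 : lam ^ 2 = ((2:ℤ) : ℤ√3) * th := by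
    ext <;> simp [lam, th, pow_two, Zsqrtd.re_mul, Zsqrtd.im_mul]
  have : lam ^ (2*i+1) = ((2:ℤ)^i : ℤ√3) * ur i := by
    rw [pow_succ, pow_mul, h2, mul_pow]
    unfold ur
    ring
  rw [this, show ((2:ℤ)^i : ℤ√3) = (((2^i : ℤ)) : ℤ√3) by push_cast; ring]
  rw [Zsqrtd.im_smul]

-- Pell descent
lemma pell_descent : ∀ yn : ℕ, ∀ x y : ℤ, y = yn → 1 ≤ x → 1 ≤ y → x^2 - 3*y^2 = -2 →
    ∃ i, x = (ur i).re ∧ y = (ur i).im := by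
  intro yn
  induction yn using Nat.strong_induction_on with
  | _ yn IH =>
    intro x y hyn hx hy heq
    rcases eq_or_lt_of_le hy with h1 | h1
    · -- y = 1
      have hx1 : x = 1 := by nlinarith
      exact ⟨0, by simp [ur, lam, hx1, ← h1]⟩
    rcases eq_or_lt_of_le (show (2:ℤ) ≤ y from h1) with h2 | h2
    · -- y = 2 : x^2 = 10, impossible
      exfalso
      have : x^2 = 10 := by nlinarith [h2.symm]
      rcases le_or_gt x 3 with h | h
      · nlinarith
      · nlinarith
    -- y ≥ 3
    have hy3 : 3 ≤ y := h2
    set x' := 2*x - 3*y with hx'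
    set y' := 2*y - x with hy'
    have heq' : x'^2 - 3*y'^2 = -2 := by rw [hx', hy']; ring_nf; linarith [heq]
    have hxy : x ≤ 2*y - 1 := by nlinarith
    have hyx : y + 1 ≤ x := by nlinarith
    have hy'1 : 1 ≤ y' := by omega
    have hy'lt : y' < y := by omega
    have hx'1 : 1 ≤ x' := by nlinarith
    obtain ⟨i, hi1, hi2⟩ := IH y'.toNat (by omega) x' y' (by omega) hx'1 hy'1 heq'
    refine ⟨i + 1, ?_, ?_⟩
    · rw [ur_succ_re, ← hi1, ← hi2]; omega
    · rw [ur_succ_im, ← hi1, ← hi2]; omega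


-- ========== ℤ√(-2) part ==========

def p2 : ℤ√(-2) := ⟨1, 1⟩

lemma p2_pow_succ_re (k : ℕ) : (p2 ^ (k+1)).re = (p2 ^ k).re - 2 * (p2 ^ k).im := by
  rw [pow_succ]; simp [Zsqrtd.re_mul, p2]; ring

lemma p2_pow_succ_im (k : ℕ) : (p2 ^ (k+1)).im = (p2 ^ k).re + (p2 ^ k).im := by
  rw [pow_succ]; simp [Zsqrtd.im_mul, p2]

lemma p2_pow_mod (k : ℕ) (hk : 1 ≤ k) :
    ¬ (3:ℤ) ∣ (p2 ^ k).re ∧ (3:ℤ) ∣ ((p2 ^ k).re - (p2 ^ k).im) := by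
  induction k with
  | zero => omega
  | succ j ih =>
    rcases Nat.eq_or_lt_of_le hk with h | h
    · have : j = 0 := by omega
      subst this
      norm_num [pow_one, p2]
    · have hj : 1 ≤ j := by omega
      obtain ⟨h1, h2⟩ := ih hj
      rw [p2_pow_succ_re, p2_pow_succ_im]
      constructor
      · intro hdvd
        apply h1
        -- re - 2 im ≡ -re mod 3 using re ≡ im
        omega
      · omega

lemma p2_pow_re_odd (k : ℕ) : (p2 ^ k).re % 2 = 1 := by
  induction k with
  | zero => norm_num
  | succ j ih => rw [p2_pow_succ_re]; omega

lemma p2_norm_pow (k : ℕ) : ((p2 ^ k).re)^2 + 2 * ((p2 ^ k).im)^2 = 3 ^ k := by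
  induction k with
  | zero => norm_num
  | succ j ih =>
    rw [p2_pow_succ_re, p2_pow_succ_im, pow_succ]
    ring_nf
    ring_nf at ih
    linarith

lemma descend_div (k : ℕ) (e : ℤ√(-2))
    (h : (3:ℤ) ∣ ((p2 ^ k * e).re + (p2 ^ k * e).im)) : (3:ℤ) ∣ (e.re + e.im) := by
  induction k generalizing e with
  | zero => simpa using h
  | succ j ih =>
    have hassoc : p2 ^ (j+1) * e = p2 ^ j * (p2 * e) := by rw [pow_succ]; ring
    rw [hassoc] at h
    have := ih (p2 * e) h
    have hre : (p2 * e).re = e.re - 2 * e.im := by simp [Zsqrtd.re_mul, p2]; ring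
    have him : (p2 * e).im = e.re + e.im := by simp [Zsqrtd.im_mul, p2]; ring
    rw [hre, him] at this
    omega


lemma zsqrtd_neg2_mul_eq_zero {x y : ℤ√(-2)} (h : x * y = 0) : x = 0 ∨ y = 0 := by
  have hn : x.norm * y.norm = 0 := by rw [← Zsqrtd.norm_mul, h, Zsqrtd.norm_zero]
  rcases mul_eq_zero.mp hn with h' | h'
  · exact Or.inl ((Zsqrtd.norm_eq_zero_iff (by norm_num : (-2:ℤ) < 0) x).mp h')
  · exact Or.inr ((Zsqrtd.norm_eq_zero_iff (by norm_num : (-2:ℤ) < 0) y).mp h')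

lemma p2_pow_norm (k : ℕ) : (p2 ^ k).norm = 3 ^ k := by
  rw [Zsqrtd.norm_def]
  have := p2_norm_pow k
  ring_nf
  ring_nf at this
  linarith

lemma starp2_pow_norm (k : ℕ) : ((star p2) ^ k).norm = 3 ^ k := by
  rw [← star_pow, Zsqrtd.norm_conj, p2_pow_norm]

-- Mordell : Im(π^k) = ±1 → k ≤ 3
lemma pow38 : ∀ j : ℕ, (3:ℤ) ^ (2*j) % 8 = 1 := by
  intro j
  induction j with
  | zero => norm_num
  | succ i ih =>
    have : (3:ℤ) ^ (2*(i+1)) = 9 * 3 ^ (2*i) := by ring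
    rw [this]; omega

lemma mordell (k : ℕ) (hk : (p2 ^ k).im = 1 ∨ (p2 ^ k).im = -1) : k ≤ 3 := by
  by_contra hk4
  push_neg at hk4
  set A := (p2 ^ k).re with hA
  have hnorm : A^2 + 2 = 3 ^ k := by
    have := p2_norm_pow k
    rcases hk with h | h <;> rw [h] at this <;> linarith
  have hAodd : A % 2 = 1 := p2_pow_re_odd k
  -- k is odd
  have hkodd : k % 2 = 1 := by
    rcases Nat.even_or_odd k with he | ho
    · exfalso
      obtain ⟨j, rfl⟩ := he
      have h8 := pow38 j
      rw [show (3:ℤ)^(2*j) = 3^(j+j) by rw [two_mul], ← hnorm] at h8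
      -- A odd → A^2 % 8 = 1 → A^2+2 % 8 = 3 ≠ 1
      obtain ⟨m, hm⟩ : ∃ m, A = 2*m+1 := ⟨A/2, by omega⟩
      have : A^2 = 4*(m*(m+1)) + 1 := by rw [hm]; ring
      have hmm : m*(m+1) % 2 = 0 := Int.even_iff.mp (Int.even_mul_succ_self m)
      omega
    · obtain ⟨j, hj⟩ := ho; omega
  obtain ⟨j, hj⟩ : ∃ j, k = 2*j+1 := ⟨k/2, by omega⟩
  -- x := |A|, y := 3^j solves x² - 3y² = -2
  have key : |A|^2 - 3 * ((3:ℤ)^j)^2 = -2 := by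
    rw [sq_abs]
    have : (3:ℤ) ^ k = 3 * ((3:ℤ)^j)^2 := by rw [hj]; ring
    rw [this] at hnorm; linarith
  have hxpos : 1 ≤ |A| := by
    rcases abs_pos.mpr (show A ≠ 0 by omega) with h
    omega
  have hypos : (1:ℤ) ≤ 3^j := one_le_pow₀ (by norm_num)
  obtain ⟨i, hi1, hi2⟩ := pell_descent ((3:ℤ)^j).toNat |A| ((3:ℤ)^j)
      (by rw [Int.toNat_of_nonneg]; linarith) hxpos hypos key
  -- LTE: 3^j ∣ 2i+1
  have hdvd : (3:ℤ)^j ∣ ((2*i+1 : ℕ) : ℤ) := by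
    apply lte j
    rw [lam_odd_pow_im, ← hi2]
    exact dvd_mul_left _ _
  have hle : (3:ℤ)^j ≤ (2*i+1 : ℕ) := Int.le_of_dvd (by positivity) hdvd
  -- growth: r i ≥ 2i+1, strict for i ≥ 2
  have hgr := (ur_growth i).2
  rw [← hi2] at hgr
  have hile : i ≤ 1 := by
    by_contra hi2'
    push_neg at hi2'
    have := ur_strict i (by omega)
    rw [← hi2] at this
    push_cast at hle this hgr
    linarith
  -- i = 0 → 3^j = 1 → j = 0 → k = 1 ; i = 1 → 3^j = 3 → j = 1 → k = 3
  interval_cases i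
  · have : ((3:ℤ)^j) = 1 := by
      have : (ur 0).im = 1 := by norm_num [ur, lam]
      omega
    have hj0 : j = 0 := by
      by_contra hj'
      have : (3:ℤ)^j ≥ 3 := by
        calc (3:ℤ)^j ≥ 3^1 := pow_le_pow_right₀ (by norm_num) (by omega)
        _ = 3 := by norm_num
      omega
    omega
  · have : ((3:ℤ)^j) = 3 := by
      have : (ur 1).im = 3 := by norm_num [ur, th, lam, pow_one, Zsqrtd.im_mul]
      omega
    have hj1 : j = 1 := by
      by_contra hj'
      rcases Nat.lt_or_ge j 1 with h | h
      · have : j = 0 := by omega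
        subst this; norm_num at this
      · have hj2 : 2 ≤ j := by omega
        have : (3:ℤ)^j ≥ 9 := by
          calc (3:ℤ)^j ≥ 3^2 := pow_le_pow_right₀ (by norm_num) hj2
          _ = 9 := by norm_num
        omega
    omega


-- ========== main recursion ==========

lemma run (Z : ℤ) (hZ3 : Z % 3 = 2) (hZbig : 121 ≤ Z^2) (hZodd : Z % 2 = 1) :
    ∀ F k : ℕ, ∀ e : ℤ√(-2), 1 ≤ k →
    (⟨Z, 1⟩ : ℤ√(-2)) = (star p2) ^ k * e → Z^2 + 2 < 3 ^ k * 3 ^ F →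
    ∃ s t : ℤ, s^2 + 2*t^2 = Z^2 + 2 ∧ ¬ (3:ℤ) ∣ s ∧ ¬ (3:ℤ) ∣ t ∧ t^2 ≠ 1 := by
  intro F
  induction F with
  | zero =>
    intro k e hk heq hbound
    exfalso
    have hnorm : Z^2 + 2 = 3^k * e.norm := by
      have h1 : (⟨Z, 1⟩ : ℤ√(-2)).norm = Z^2+2 := by simp [Zsqrtd.norm_def]; ring
      have h2 : ((star p2)^k * e).norm = 3^k * e.norm := by
        rw [Zsqrtd.norm_mul, starp2_pow_norm]
      rw [← h1, heq, h2]
    have he0 : e.norm ≠ 0 := by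
      intro h; rw [h, mul_zero] at hnorm; nlinarith
    have he1 : 1 ≤ e.norm := by
      have := Zsqrtd.norm_nonneg (by norm_num : (-2:ℤ) ≤ 0) e
      omega
    have : (3:ℤ)^k ≤ 3^k * e.norm := le_mul_of_one_le_right (by positivity) he1
    simp only [pow_zero, mul_one] at hbound
    linarith
  | succ F ih =>
    intro k e hk heq hbound
    have hnorm : Z^2 + 2 = 3^k * e.norm := by
      have h1 : (⟨Z, 1⟩ : ℤ√(-2)).norm = Z^2+2 := by simp [Zsqrtd.norm_def]; ring
      have h2 : ((star p2)^k * e).norm = 3^k * e.norm := by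
        rw [Zsqrtd.norm_mul, starp2_pow_norm]
      rw [← h1, heq, h2]
    set w := p2 ^ k * e with hw
    set s := w.re with hs
    set t := w.im with ht
    have hwnorm : s^2 + 2*t^2 = Z^2 + 2 := by
      have : w.norm = 3^k * e.norm := by
        rw [hw, Zsqrtd.norm_mul, p2_pow_norm]
      have h3 : w.norm = s^2 + 2*t^2 := by simp [Zsqrtd.norm_def, hs, ht]; ring
      rw [h3] at this; linarith [hnorm]
    by_cases h3st : (3:ℤ) ∣ (s + t)
    · -- step
      have hde : (3:ℤ) ∣ (e.re + e.im) := descend_div k e h3st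
      obtain ⟨g, hg⟩ := hde
      have hh : e.re - 2*e.im = 3 * (g - e.im) := by linarith
      set e' : ℤ√(-2) := ⟨g - e.im, g⟩ with he'
      have hfac : star p2 * e' = e := by
        ext
        · show 1 * (g - e.im) + (-2) * (-1) * g = e.re
          linarith
        · show 1 * g + (-1) * (g - e.im) = e.im
          ring
      have heq' : (⟨Z, 1⟩ : ℤ√(-2)) = (star p2) ^ (k+1) * e' := by
        rw [heq, ← hfac, pow_succ]; ring
      have hbound' : Z^2 + 2 < 3 ^ (k+1) * 3 ^ F := by
        have : (3:ℤ) ^ (k+1) * 3 ^ F = 3 ^ k * 3 ^ (F+1) := by ring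
        rw [this]; exact hbound
      exact ih (k+1) e' (by omega) heq' hbound'
    · -- terminal
      have hZdvd : (3:ℤ) ∣ Z^2 + 2 := by
        obtain ⟨z, hz⟩ : ∃ z, Z = 3*z+2 := ⟨Z/3, by omega⟩
        exact ⟨3*z^2+4*z+2, by rw [hz]; ring⟩
      refine ⟨s, t, hwnorm, ?_, ?_, ?_⟩
      · intro hsd
        apply h3st
        have h2t : (3:ℤ) ∣ 2*t^2 := by
          have : (3:ℤ) ∣ s^2 := dvd_pow hsd (by norm_num)
          omega
        have h1t : (3:ℤ) ∣ t^2 := by omega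
        have : (3:ℤ) ∣ t := Int.prime_three.dvd_of_dvd_pow h1t
        omega
      · intro htd
        apply h3st
        have h1s : (3:ℤ) ∣ s^2 := by
          have h2t : (3:ℤ) ∣ 2*t^2 := Dvd.dvd.mul_left (dvd_pow htd (by norm_num)) 2
          omega
        have : (3:ℤ) ∣ s := Int.prime_three.dvd_of_dvd_pow h1s
        omega
      · intro ht1
        have hsZ : s^2 = Z^2 := by linarith
        have he0 : e ≠ 0 := by
          intro h
          rw [h, Zsqrtd.norm_zero, mul_zero] at hnorm
          nlinarith
        have hp2k0 : p2 ^ k ≠ 0 := by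
          intro h
          have : (p2^k).re ^2 + 2*(p2^k).im^2 = 3^k := p2_norm_pow k
          rw [h] at this
          simp at this
          have : (0:ℤ) < 3^k := by positivity
          omega
        have hcases : (s = Z ∨ s = -Z) ∧ (t = 1 ∨ t = -1) := by
          constructor
          · have : (s - Z) * (s + Z) = 0 := by nlinarith
            rcases mul_eq_zero.mp this with h | h
            · left; linarith
            · right; linarith
          · have : (t - 1) * (t + 1) = 0 := by nlinarith
            rcases mul_eq_zero.mp this with h | h
            · left; linarith
            · right; linarith
        have hmod := p2_pow_mod k hk
        rcases hcases with ⟨hsc, htc⟩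
        rcases hsc with hsc | hsc <;> rcases htc with htc | htc
        · -- w = ⟨Z,1⟩ : π^k e = π̄^k e
          have hwe : p2 ^ k * e = (star p2)^k * e := by
            rw [← heq]
            ext
            · exact hsc
            · exact htc
          have : (p2 ^ k - (star p2)^k) * e = 0 := by rw [sub_mul, hwe]; ring
          rcases zsqrtd_neg2_mul_eq_zero this with h | h
          · have heqp : p2 ^ k = (star p2) ^ k := by
              have := sub_eq_zero.mp h; exact this
            have him := congrArg Zsqrtd.im heqp
            rw [← star_pow, Zsqrtd.im_star] at him
            have : (p2^k).im = 0 := by omega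
            omega
          · exact he0 h
        · -- w = star ⟨Z,1⟩ : π^k e = π^k (star e)
          have hwe : p2 ^ k * e = p2 ^ k * star e := by
            have : star ((⟨Z,1⟩ : ℤ√(-2))) = (⟨Z,-1⟩ : ℤ√(-2)) := by
              ext <;> simp [Zsqrtd.re_star, Zsqrtd.im_star]
            have hstar : star ((star p2)^k * e) = p2 ^ k * star e := by
              rw [star_mul, star_pow, star_star, mul_comm]
            rw [← hstar, ← heq, this]
            ext
            · exact hsc
            · exact htc
          have : p2 ^ k * (e - star e) = 0 := by rw [mul_sub, hwe]; ring
          rcases zsqrtd_neg2_mul_eq_zero this with h | h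
          · exact hp2k0 h
          · have him0 : e.im = 0 := by
              have h1 := sub_eq_zero.mp h
              have h2 := congrArg Zsqrtd.im h1
              rw [Zsqrtd.im_star] at h2
              omega
            -- e = ⟨a,0⟩, norm = a², and 1 = -a·B
            have himeq : (1:ℤ) = (star p2 ^ k * e).im := by
              rw [← heq]
            have hB : (star p2 ^ k).im = -(p2^k).im := by
              rw [← star_pow, Zsqrtd.im_star]
            rw [Zsqrtd.im_mul, him0, mul_zero, zero_add, hB] at himeq
            -- 1 = -(B) * e.re
            have hunit : e.re = 1 ∨ e.re = -1 := by
              have habs : e.re * (-(p2^k).im) = 1 := by linarith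
              rcases Int.isUnit_iff.mp (IsUnit.of_mul_eq_one (a := e.re) _ habs) with h | h
              · exact Or.inl h
              · exact Or.inr h
            have hBval : (p2^k).im = 1 ∨ (p2^k).im = -1 := by
              rcases hunit with h | h <;> rw [h] at himeq <;> omega
            have hk3 : k ≤ 3 := mordell k hBval
            have henorm : e.norm = e.re^2 := by
              simp [Zsqrtd.norm_def, him0]; ring
            have hre1 : e.re^2 = 1 := by rcases hunit with h | h <;> rw [h] <;> norm_num
            have : Z^2 + 2 = 3^k := by
              rw [hnorm, henorm, hre1, mul_one]
            have : (3:ℤ)^k ≤ 27 := by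
              calc (3:ℤ)^k ≤ 3^3 := pow_le_pow_right₀ (by norm_num) hk3
              _ = 27 := by norm_num
            omega
        · -- w = -star ⟨Z,1⟩ : π^k e = -π^k (star e)
          have hwe : p2 ^ k * e = -(p2 ^ k * star e) := by
            have hstar : star ((star p2)^k * e) = p2 ^ k * star e := by
              rw [star_mul, star_pow, star_star, mul_comm]
            have : p2 ^ k * star e = (⟨Z,-1⟩ : ℤ√(-2)) := by
              rw [← hstar, ← heq]
              ext <;> simp [Zsqrtd.re_star, Zsqrtd.im_star]
            rw [this]
            ext
            · show s = -Z
              exact hsc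
            · show t = -(-1)
              rw [htc]; ring
          have : p2 ^ k * (e + star e) = 0 := by rw [mul_add, hwe]; ring
          rcases zsqrtd_neg2_mul_eq_zero this with h | h
          · exact hp2k0 h
          · have hre0 : e.re = 0 := by
              have h2 := congrArg Zsqrtd.re h
              rw [Zsqrtd.re_add, Zsqrtd.re_star] at h2
              simp at h2
              omega
            have henorm : e.norm = 2 * e.im^2 := by
              simp [Zsqrtd.norm_def, hre0]; ring
            -- parity contradiction
            obtain ⟨m, hm⟩ : ∃ m, Z = 2*m+1 := ⟨Z/2, by omega⟩
            have : Z^2+2 = 3^k * (2*e.im^2) := by rw [hnorm, henorm]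
            have hodd : (Z^2+2) % 2 = 1 := by
              rw [hm]
              have : (2*m+1)^2+2 = 2*(2*m^2+2*m+1) + 1 := by ring
              omega
            have heven : (3^k * (2*e.im^2)) % 2 = 0 := by
              have : (3:ℤ)^k * (2*e.im^2) = 2*(3^k*e.im^2) := by ring
              omega
            omega
        · -- w = -⟨Z,1⟩
          have hwe : p2 ^ k * e = -((star p2)^k * e) := by
            rw [← heq]
            ext
            · show s = -Z; exact hsc
            · show t = -(1:ℤ); exact htc
          have : (p2 ^ k + (star p2)^k) * e = 0 := by rw [add_mul, hwe]; ring
          rcases zsqrtd_neg2_mul_eq_zero this with h | h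
          · have heqp : p2 ^ k = -((star p2) ^ k) := eq_neg_of_add_eq_zero_left h
            have hre := congrArg Zsqrtd.re heqp
            rw [Zsqrtd.re_neg, ← star_pow, Zsqrtd.re_star] at hre
            have : (p2^k).re = 0 := by omega
            exact hmod.1 (by rw [this]; exact dvd_zero 3)
          · exact he0 h


lemma fuel_bound : ∀ m : ℕ, (m:ℤ) + 2 < 3 ^ (m+1) := by
  intro m
  induction m with
  | zero => norm_num
  | succ j ih =>
    have : (3:ℤ)^(j+1+1) = 3 * 3^(j+1) := by ring
    rw [this]
    push_cast
    push_cast at ih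
    linarith

lemma sq_mod8 (x : ℤ) (hx : x % 2 = 1) : (8:ℤ) ∣ x^2 - 1 := by
  obtain ⟨q, hq⟩ : ∃ q, x = 2*q+1 := ⟨x/2, by omega⟩
  have he : (2:ℤ) ∣ q*(q+1) := (Int.even_mul_succ_self q).two_dvd
  obtain ⟨u, hu⟩ := he
  exact ⟨u, by rw [hq]; nlinarith [hu]⟩

/-- from an odd x coprime to 3, build the gen pentagonal number (x²-1)/24 -/
lemma build_pent (x : ℤ) (hodd : x % 2 = 1) (h3 : ¬ (3:ℤ) ∣ x) :
    ∃ a : ℤ, 24 * a = x^2 - 1 ∧ (∃ m : ℤ, 2 * a = m * (3 * m - 1)) := by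
  have hx6 : x % 6 = 1 ∨ x % 6 = 5 := by omega
  rcases hx6 with h | h
  · obtain ⟨q, hq⟩ : ∃ q, x = 6*q+1 := ⟨x/6, by omega⟩
    obtain ⟨u, hu⟩ := Int.even_mul_succ_self q
    refine ⟨u + q^2, by rw [hq]; nlinarith [hu], ⟨-q, by nlinarith [hu]⟩⟩
  · obtain ⟨q, hq⟩ : ∃ q, x = 6*q-1 := ⟨(x+1)/6, by omega⟩
    obtain ⟨u, hu⟩ := Int.even_mul_succ_self q
    refine ⟨u + q^2 - q, by rw [hq]; nlinarith [hu], ⟨q, by nlinarith [hu]⟩⟩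

end GPaux

def IsGenPentagonal (c : ℤ) : Prop := ∃ n : ℤ, 2 * c = n * (3 * n - 1)

theorem genPentagonal_two_a_plus_b (c : ℤ) (hc : IsGenPentagonal c) (h5 : 5 ≤ c) :
    ∃ a b : ℤ, IsGenPentagonal a ∧ IsGenPentagonal b ∧ a < c ∧ b < c ∧ c = 2 * a + b := by
  open GPaux in
  obtain ⟨n0, hn0⟩ := hc
  set Z : ℤ := 6*n0 - 1 with hZ
  have hZsq : Z^2 = 24*c + 1 := by rw [hZ]; nlinarith [hn0]
  have hZ3 : Z % 3 = 2 := by omega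
  have hZodd : Z % 2 = 1 := by omega
  have hZbig : 121 ≤ Z^2 := by omega
  -- initial element
  obtain ⟨z, hz⟩ : ∃ z, Z = 3*z - 1 := ⟨(Z+1)/3, by omega⟩
  have heq1 : (⟨Z, 1⟩ : ℤ√(-2)) = (star p2) ^ 1 * (⟨z-1, z⟩ : ℤ√(-2)) := by
    rw [pow_one]
    ext
    · show Z = (star p2).re * (z-1) + (-2) * (star p2).im * z
      simp [p2, Zsqrtd.re_star, Zsqrtd.im_star]
      omega
    · show (1:ℤ) = (star p2).re * z + (star p2).im * (z-1)
      simp [p2, Zsqrtd.re_star, Zsqrtd.im_star]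
  set F : ℕ := (Z^2).toNat with hF
  have hbound : Z^2 + 2 < 3 ^ 1 * 3 ^ F := by
    have h1 := fuel_bound F
    have h2 : (F:ℤ) = Z^2 := by rw [hF, Int.toNat_of_nonneg (by positivity)]
    have h3 : (3:ℤ)^(F+1) = 3^1 * 3^F := by ring
    rw [← h3]
    omega
  obtain ⟨s, t, hst, hs3, ht3, ht1⟩ := run Z hZ3 hZbig hZodd F 1 ⟨z-1, z⟩ le_rfl heq1 hbound
  -- parities
  have hsodd : s % 2 = 1 := by
    rcases Int.even_or_odd s with ⟨q, hq⟩ | ⟨q, hq⟩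
    · exfalso
      have h2 : (2:ℤ) ∣ s := ⟨q, by omega⟩
      obtain ⟨w, hw⟩ := dvd_pow h2 (two_ne_zero)
      have h5 : (2:ℤ) ∣ Z^2 := ⟨w + t^2 - 1, by linarith⟩
      have h6 : (2:ℤ) ∣ Z := Int.prime_two.dvd_of_dvd_pow h5
      omega
    · omega
  have htodd : t % 2 = 1 := by
    rcases Int.even_or_odd t with ⟨q, hq⟩ | ⟨q, hq⟩
    · exfalso
      obtain ⟨u1, hu1⟩ := sq_mod8 s hsodd
      obtain ⟨u2, hu2⟩ := sq_mod8 Z hZodd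
      obtain ⟨q2, hq2⟩ : ∃ w, 2*t^2 = 8*w := ⟨q^2, by rw [hq]; ring⟩
      have key : 8*u1 + 8*q2 = 8*u2 + 2 := by linarith
      omega
    · omega
  have htbig : 25 ≤ t^2 := by
    have hne : t ≠ 1 ∧ t ≠ -1 := by
      constructor <;> intro h <;> rw [h] at ht1 <;> norm_num at ht1
    have : 5 ≤ t ∨ t ≤ -5 := by omega
    rcases this with h | h <;> nlinarith
  have hs1 : 1 ≤ s^2 := by
    have h0 : s ≠ 0 := by omega
    have := sq_pos_of_ne_zero h0
    omega
  obtain ⟨a, ha24, ham⟩ := build_pent t htodd ht3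
  obtain ⟨b, hb24, hbm⟩ := build_pent s hsodd hs3
  refine ⟨a, b, ham, hbm, ?_, ?_, ?_⟩
  · -- a < c : t² < Z²
    nlinarith [hst, hs1]
  · -- b < c : s² < Z²
    nlinarith [hst, htbig]
  · -- c = 2a + b
    nlinarith [hst]
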